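/- Let A be a polytope (compact convex set with finitely many extreme points) in ℝⁿ and B a nonempty closed convex subset of A. Then there exists an extreme point v of A such that the Hausdorff distance d_H(A,B) equals the distance from v to B, i.e., d_H(A,B) = inf_{b ∈ B} ‖v - b‖. -/

import Mathlib

open Metric Set

lemma convexOn_infDist_aux {E : Type*} [NormedAddCommGroup E] [NormedSpace ℝ E]
    {B : Set E} (hBne : B.Nonempty) (hBconv : Convex ℝ B) :
    ConvexOn ℝ Set.univ (fun x => Metric.infDist x B) := by
  refine ⟨convex_univ, fun x _ y _ a b ha hb hab => ?_⟩
  simp only [smul_eq_mul]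
  refine le_of_forall_pos_le_add fun ε hε => ?_
  obtain ⟨b₁, hb₁, hd₁⟩ := (Metric.infDist_lt_iff hBne).mp (by linarith : Metric.infDist x B < Metric.infDist x B + ε)
  obtain ⟨b₂, hb₂, hd₂⟩ := (Metric.infDist_lt_iff hBne).mp (by linarith : Metric.infDist y B < Metric.infDist y B + ε)
  have hmem : a • b₁ + b • b₂ ∈ B := hBconv hb₁ hb₂ ha hb hab
  calc Metric.infDist (a • x + b • y) B ≤ dist (a • x + b • y) (a • b₁ + b • b₂) :=
        Metric.infDist_le_dist_of_mem hmem
    _ ≤ a * dist x b₁ + b * dist y b₂ := dist_add_add_le_of_le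
        (by rw [dist_smul₀, Real.norm_of_nonneg ha]) (by rw [dist_smul₀, Real.norm_of_nonneg hb])
    _ ≤ a * (Metric.infDist x B + ε) + b * (Metric.infDist y B + ε) := by
        gcongr
    _ = a * Metric.infDist x B + b * Metric.infDist y B + ε := by linear_combination ε * hab

theorem hausdorff_dist_attained_at_extreme_point
    (n : ℕ) (S : Set (EuclideanSpace ℝ (Fin n))) (hS : S.Finite)
    (A B : Set (EuclideanSpace ℝ (Fin n)))
    (hA : A = convexHull ℝ S)
    (hBne : B.Nonempty) (hBclosed : IsClosed B) (hBconv : Convex ℝ B)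
    (hBA : B ⊆ A) :
    ∃ v ∈ Set.extremePoints ℝ A,
      Metric.hausdorffDist A B = Metric.infDist v B := by
  have hAcompact : IsCompact A := hA ▸ (hS.isCompact_convexHull ℝ)
  have hAconv : Convex ℝ A := hA ▸ convex_convexHull ℝ S
  set E := Set.extremePoints ℝ A with hE
  have hES : E ⊆ S := by
    rw [hE, hA]
    exact extremePoints_convexHull_subset
  have hEfin : E.Finite := hS.subset hES
  -- A = convexHull E
  have hAE : A = convexHull ℝ E := by
    have h1 := closure_convexHull_extremePoints hAcompact hAconv
    rw [← h1, IsClosed.closure_eq (hEfin.isCompact_convexHull ℝ).isClosed]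
  have hAne : A.Nonempty := hBne.mono hBA
  have hEne : E.Nonempty := by
    rcases Set.eq_empty_or_nonempty E with h | h
    · exfalso
      rw [h, convexHull_empty] at hAE
      exact hAne.ne_empty hAE
    · exact h
  -- pick v maximizing infDist over E
  obtain ⟨v, hvE, hvmax⟩ := hEfin.toFinset.exists_max_image (fun x => Metric.infDist x B)
    (by rwa [Set.Finite.toFinset_nonempty])
  rw [Set.Finite.mem_toFinset] at hvE
  simp only [Set.Finite.mem_toFinset] at hvmax
  have hconv := convexOn_infDist_aux hBne hBconv
  have hmax : ∀ x ∈ A, Metric.infDist x B ≤ Metric.infDist v B := by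
    intro x hx
    rw [hAE] at hx
    obtain ⟨y, hyE, hxy⟩ := hconv.exists_ge_of_mem_convexHull (Set.subset_univ E) hx
    exact hxy.trans (hvmax y hyE)
  have hEdist : EMetric.hausdorffEdist A B ≠ ⊤ :=
    Metric.hausdorffEdist_ne_top_of_nonempty_of_bounded hAne hBne
      hAcompact.isBounded (hAcompact.isBounded.subset hBA)
  refine ⟨v, hvE, le_antisymm ?_ ?_⟩
  · refine Metric.hausdorffDist_le_of_infDist (Metric.infDist_nonneg) hmax ?_
    intro y hy
    rw [Metric.infDist_zero_of_mem (hBA hy)]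
    exact Metric.infDist_nonneg
  · exact Metric.infDist_le_hausdorffDist_of_mem (hvE.1) hEdist
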